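/- arXiv:2005.10185 — 2 statements merged into one kernel-verified Lean document; each statement's English description precedes it below -/
import Mathlib

section
/- Let E be a number field of degree n with ring of integers O_E, let d ≥ 1 be an integer, and let p be a rational prime with p > d^(2n). Suppose a ∈ O_E is nonzero, every complex embedding σ : E → ℂ satisfies |σ(a)| ≤ d·√p (i.e., a is a sum of d many p-Weil numbers of weight 1, but only the archimedean bound is needed). If v = Σ_{P | p} f_P · v_P(a), where the sum is over primes P of E above p, f_P is the absolute residue degree of P, and v_P is the P-adic valuation, then v ≤ n/2. -/
open NumberField UniqueFactorizationMonoid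
open scoped Classical

/-- If `E` is a number field of degree `n`, `d ≥ 1`, `p` a prime with
`p > d^(2n)`, and `a ∈ 𝓞 E` is nonzero with all archimedean absolute values at most
`d·√p`, then `∑_{P ∣ p} f_P · v_P(a) ≤ n/2`. -/
theorem statement0 (E : Type) [Field E] [NumberField E]
    (n : ℕ) (hn : Module.finrank ℚ E = n)
    (d : ℕ) (hd : 1 ≤ d) (p : ℕ) (hp : p.Prime) (hpd : d ^ (2 * n) < p)
    (a : 𝓞 E) (ha : a ≠ 0)
    (habs : ∀ σ : E →+* ℂ, ‖σ (algebraMap (𝓞 E) E a)‖ ≤ (d : ℝ) * Real.sqrt p)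
    (s : Finset (Ideal (𝓞 E)))
    (hs : ∀ P : Ideal (𝓞 E), P ∈ s ↔ P.IsMaximal ∧ (p : 𝓞 E) ∈ P)
    (f : Ideal (𝓞 E) → ℕ)
    (hf : ∀ P ∈ s, Ideal.absNorm P = p ^ f P) :
    2 * ∑ P ∈ s, f P * Multiset.count P (normalizedFactors (Ideal.span {a})) ≤ n := by
  set I : Ideal (𝓞 E) := Ideal.span {a} with hI
  have hI0 : I ≠ 0 := by
    simpa [hI, Ideal.span_singleton_eq_bot] using ha
  set nf := normalizedFactors I with hnf
  set v := ∑ P ∈ s, f P * Multiset.count P nf with hv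
  set T := nf.filter (· ∈ s) with hT
  have hTle : T ≤ nf := Multiset.filter_le _ _
  have hdvd : T.prod ∣ I := by
    have := Multiset.prod_dvd_prod_of_le hTle
    rwa [prod_normalizedFactors_eq_self hI0] at this
  have hNdvd : Ideal.absNorm T.prod ∣ Ideal.absNorm I :=
    map_dvd Ideal.absNorm hdvd
  -- compute absNorm of T.prod
  have habsT : Ideal.absNorm T.prod = p ^ v := by
    rw [map_multiset_prod]
    have h1 : T.map (Ideal.absNorm (S := 𝓞 E)) = T.map (fun P => p ^ f P) :=
      Multiset.map_congr rfl (fun P hP => hf P (Multiset.of_mem_filter hP))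
    rw [h1, Finset.prod_multiset_map_count]
    have hsub : T.toFinset ⊆ s := fun P hP =>
      Multiset.of_mem_filter (Multiset.mem_toFinset.mp hP)
    have h2 : ∏ P ∈ T.toFinset, (p ^ f P) ^ Multiset.count P T
        = ∏ P ∈ T.toFinset, (p ^ f P) ^ Multiset.count P nf := by
      refine Finset.prod_congr rfl (fun P hP => ?_)
      rw [hT, Multiset.count_filter_of_pos (hsub hP)]
    have h3 : ∏ P ∈ T.toFinset, (p ^ f P) ^ Multiset.count P nf
        = ∏ P ∈ s, (p ^ f P) ^ Multiset.count P nf := by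
      refine Finset.prod_subset hsub (fun P hPs hPT => ?_)
      have hPnf : P ∉ nf := by
        intro h
        exact hPT (Multiset.mem_toFinset.mpr (Multiset.mem_filter.mpr ⟨h, hPs⟩))
      rw [Multiset.count_eq_zero.mpr hPnf, pow_zero]
    rw [h2, h3, hv]
    rw [← Finset.prod_pow_eq_pow_sum]
    exact Finset.prod_congr rfl (fun P _ => by rw [← pow_mul])
  -- the norm bound
  have hN0 : Ideal.absNorm I ≠ 0 := by
    rw [Ne, Ideal.absNorm_eq_zero_iff]
    exact hI0
  have hple : p ^ v ≤ Ideal.absNorm I := by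
    rw [← habsT]
    exact Nat.le_of_dvd (Nat.pos_of_ne_zero hN0) hNdvd
  -- absNorm I ≤ (d * sqrt p)^n  over ℝ
  have hbound : (Ideal.absNorm I : ℝ) ≤ ((d : ℝ) * Real.sqrt p) ^ n := by
    have h4 : (Ideal.absNorm I : ℝ) = |(Algebra.norm ℚ (algebraMap (𝓞 E) E a) : ℚ)| := by
      rw [hI, Ideal.absNorm_span_singleton, ← Algebra.coe_norm_int]
      push_cast [Nat.cast_natAbs]
      norm_num
    have h5 : ‖algebraMap ℚ ℂ (Algebra.norm ℚ (algebraMap (𝓞 E) E a))‖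
        = ∏ σ : E →ₐ[ℚ] ℂ, ‖σ (algebraMap (𝓞 E) E a)‖ := by
      rw [Algebra.norm_eq_prod_embeddings, norm_prod]
    have h6 : |(Algebra.norm ℚ (algebraMap (𝓞 E) E a) : ℚ)|
        = (∏ σ : E →ₐ[ℚ] ℂ, ‖σ (algebraMap (𝓞 E) E a)‖ : ℝ) := by
      rw [← h5, eq_ratCast (algebraMap ℚ ℂ), Complex.norm_ratCast, Rat.cast_abs]
    rw [h4, h6]
    calc (∏ σ : E →ₐ[ℚ] ℂ, ‖σ (algebraMap (𝓞 E) E a)‖)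
        ≤ ∏ _σ : E →ₐ[ℚ] ℂ, ((d : ℝ) * Real.sqrt p) := by
          refine Finset.prod_le_prod (fun σ _ => norm_nonneg _) (fun σ _ => ?_)
          exact habs σ.toRingHom
      _ = ((d : ℝ) * Real.sqrt p) ^ n := by
          rw [Finset.prod_const, Finset.card_univ]
          congr 1
          rw [← hn, ← NumberField.Embeddings.card E ℂ]
          exact Fintype.card_congr (RingHom.equivRatAlgHom E ℂ).symm
  -- square it: (absNorm I)^2 ≤ d^(2n) * p^n in ℕ
  have hsq : (Ideal.absNorm I) ^ 2 ≤ d ^ (2 * n) * p ^ n := by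
    have h7 : ((Ideal.absNorm I : ℝ)) ^ 2 ≤ (((d : ℝ) * Real.sqrt p) ^ n) ^ 2 :=
      pow_le_pow_left₀ (by positivity) hbound 2
    have h8 : (((d : ℝ) * Real.sqrt p) ^ n) ^ 2 = (d : ℝ) ^ (2 * n) * (p : ℝ) ^ n := by
      rw [← pow_mul, mul_comm n 2, pow_mul, mul_pow,
        Real.sq_sqrt (by positivity : (0:ℝ) ≤ (p:ℕ)), mul_pow, ← pow_mul]
    rw [h8] at h7
    exact_mod_cast h7
  -- conclude
  have hfinal : p ^ (2 * v) < p ^ (n + 1) := by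
    calc p ^ (2 * v) = (p ^ v) ^ 2 := by rw [← pow_mul, mul_comm]
      _ ≤ (Ideal.absNorm I) ^ 2 := Nat.pow_le_pow_left hple 2
      _ ≤ d ^ (2 * n) * p ^ n := hsq
      _ < p * p ^ n := by
          exact Nat.mul_lt_mul_of_lt_of_le hpd le_rfl (pow_pos hp.pos n)
      _ = p ^ (n + 1) := by ring
  have := (Nat.pow_lt_pow_iff_right hp.one_lt).mp hfinal
  omega
end

section
/- Let E be a number field with [E:ℚ] = n, d ≥ 1, and let R be the set of primes p > d^{2n}. For p ∈ R and a ∈ O_E nonzero with |σ(a)| ≤ d√p for all embeddings σ : E → ℂ, and p unramified in E: a is not divisible by p in O_E. -/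
open NumberField
open scoped Classical

/-- `E` of degree `n`, `d ≥ 1`, `p > d^(2n)` unramified in `E`,
`a ∈ 𝓞 E` nonzero with `|σ(a)| ≤ d√p` for all complex embeddings. Then `p ∤ a`. -/
theorem statement16 (E : Type) [Field E] [NumberField E]
    (n : ℕ) (hn : Module.finrank ℚ E = n)
    (d : ℕ) (hd : 1 ≤ d) (p : ℕ) (hp : p.Prime) (hpd : d ^ (2 * n) < p)
    (hunram : Squarefree (Ideal.span {(p : 𝓞 E)}))
    (a : 𝓞 E) (ha : a ≠ 0)
    (habs : ∀ σ : E →+* ℂ, ‖σ (algebraMap (𝓞 E) E a)‖ ≤ (d : ℝ) * Real.sqrt p) :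
    ¬ (p : 𝓞 E) ∣ a := by
  intro hdvd
  obtain ⟨b, hb⟩ := hdvd
  have hb0 : b ≠ 0 := by
    rintro rfl
    rw [mul_zero] at hb
    exact ha hb
  have hn1 : 1 ≤ n := by
    rw [← hn]
    exact Module.finrank_pos
  set N : ℚ := Algebra.norm ℚ (algebraMap (𝓞 E) E a) with hN
  -- upper bound : |N| ≤ (d √p)^n
  have hupper : |(N : ℝ)| ≤ ((d : ℝ) * Real.sqrt p) ^ n := by
    have h1 : (algebraMap ℚ ℂ N) = ∏ σ : E →ₐ[ℚ] ℂ, σ (algebraMap (𝓞 E) E a) :=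
      Algebra.norm_eq_prod_embeddings ℚ ℂ _
    have h2 : |(N : ℝ)| = ∏ σ : E →ₐ[ℚ] ℂ, ‖σ (algebraMap (𝓞 E) E a)‖ := by
      have := congrArg (‖·‖) h1
      rw [norm_prod] at this
      rw [← this, eq_ratCast, ← Complex.ofReal_ratCast, Complex.norm_real, Real.norm_eq_abs]
    rw [h2]
    have hcard : Fintype.card (E →ₐ[ℚ] ℂ) = n := by
      rw [AlgHom.card, hn]
    calc ∏ σ : E →ₐ[ℚ] ℂ, ‖σ (algebraMap (𝓞 E) E a)‖
        ≤ ∏ _σ : E →ₐ[ℚ] ℂ, ((d : ℝ) * Real.sqrt p) := by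
          refine Finset.prod_le_prod (fun σ _ => norm_nonneg _) (fun σ _ => habs σ.toRingHom)
      _ = ((d : ℝ) * Real.sqrt p) ^ n := by rw [Finset.prod_const, Finset.card_univ, hcard]
  -- lower bound : p^n ≤ |N|
  have hlower : (p : ℝ) ^ n ≤ |(N : ℝ)| := by
    have hmap : algebraMap (𝓞 E) E a = (p : E) * algebraMap (𝓞 E) E b := by
      rw [hb]; push_cast; ring
    have hNb : (1 : ℚ) ≤ |Algebra.norm ℚ (algebraMap (𝓞 E) E b)| := by
      rw [← Algebra.coe_norm_int]
      exact_mod_cast Int.one_le_abs (Algebra.norm_ne_zero_iff.mpr hb0)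
    have hsplit : N = (p : ℚ) ^ n * Algebra.norm ℚ (algebraMap (𝓞 E) E b) := by
      rw [hN, hmap, map_mul]
      congr 1
      have : ((p : ℕ) : E) = algebraMap ℚ E (p : ℚ) := by push_cast; rfl
      rw [this, Algebra.norm_algebraMap, hn]
    have : (p : ℚ) ^ n ≤ |N| := by
      rw [hsplit, abs_mul, abs_pow, abs_of_nonneg (by positivity : (0:ℚ) ≤ (p:ℚ))]
      nlinarith [pow_pos (by exact_mod_cast hp.pos : (0:ℚ) < (p:ℚ)) n, hNb]
    calc (p : ℝ) ^ n = ((((p : ℚ)) ^ n : ℚ) : ℝ) := by push_cast; ring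
      _ ≤ ((|N| : ℚ) : ℝ) := by exact_mod_cast this
      _ = |(N : ℝ)| := by push_cast; ring
  -- combine
  have hkey : (p : ℝ) ^ n ≤ (d : ℝ) ^ n * Real.sqrt p ^ n := by
    calc (p : ℝ) ^ n ≤ |(N : ℝ)| := hlower
      _ ≤ ((d : ℝ) * Real.sqrt p) ^ n := hupper
      _ = (d : ℝ) ^ n * Real.sqrt p ^ n := mul_pow _ _ _
  have hsq : (p : ℝ) ^ (2 * n) ≤ (d : ℝ) ^ (2 * n) * (p : ℝ) ^ n := by
    have h0 : (0 : ℝ) ≤ (p : ℝ) ^ n := by positivity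
    have := mul_le_mul hkey hkey h0 (by positivity)
    calc (p : ℝ) ^ (2 * n) = (p : ℝ) ^ n * (p : ℝ) ^ n := by rw [two_mul, pow_add]
      _ ≤ ((d : ℝ) ^ n * Real.sqrt p ^ n) * ((d : ℝ) ^ n * Real.sqrt p ^ n) := this
      _ = (d : ℝ) ^ (2 * n) * (Real.sqrt p ^ 2) ^ n := by rw [two_mul, pow_add]; ring
      _ = (d : ℝ) ^ (2 * n) * (p : ℝ) ^ n := by
          rw [Real.sq_sqrt (by positivity)]
  have hlt : (d : ℝ) ^ (2 * n) * (p : ℝ) ^ n < (p : ℝ) ^ (2 * n) := by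
    have hdp : (d : ℝ) ^ (2 * n) < (p : ℝ) := by exact_mod_cast hpd
    have hp1 : (1 : ℝ) < (p : ℝ) := by exact_mod_cast hp.one_lt
    calc (d : ℝ) ^ (2 * n) * (p : ℝ) ^ n < (p : ℝ) * (p : ℝ) ^ n :=
          mul_lt_mul_of_pos_right hdp (by positivity)
      _ = (p : ℝ) ^ (n + 1) := by rw [pow_succ]; ring
      _ ≤ (p : ℝ) ^ (2 * n) := pow_le_pow_right₀ hp1.le (by omega)
  linarith
end
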